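/- Let G be a connected n-vertex d-regular graph with eigenvalues d = λ_1 >= λ_2 >= ... >= λ_n and eigenvectors u_1,...,u_n. Set λ*_1 = n-1-d and λ*_i = -1-λ_i for i >= 2. Let B be the set of vectors b ∈ {-1,0,1}^k with at least t entries equal to 1. Then for every (i_1,...,i_k), the vector u_{i_1} ⊗ ... ⊗ u_{i_k} is an eigenvector of the adjacency matrix of GP_{k,t}(G), with eigenvalue Λ_{i_1...i_k} = sum_{b ∈ B} prod_{j=1}^{k} ( ((1+b_j)/2) λ_{i_j}^{|b_j|} + ((1-b_j)/2) (λ*_{i_j})^{|b_j|} ). -/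

import Mathlib

open Matrix Finset

/-- The `t`-threshold graph product `GP_{k,t}(G)`. -/
def GP {V : Type*} (k t : ℕ) (G : SimpleGraph V) [DecidableRel G.Adj] :
    SimpleGraph (Fin k → V) where
  Adj x y := x ≠ y ∧ t ≤ (Finset.univ.filter (fun i => G.Adj (x i) (y i))).card
  symm := by
    constructor
    rintro x y ⟨hne, h⟩
    refine ⟨hne.symm, ?_⟩
    have hset : (Finset.univ.filter (fun i => G.Adj (y i) (x i)))
        = (Finset.univ.filter (fun i => G.Adj (x i) (y i))) := by
      apply Finset.filter_congr
      intro i _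
      exact G.adj_comm (y i) (x i)
    rw [hset]
    exact h
  loopless := ⟨fun x h => h.1 rfl⟩

instance {V : Type*} [DecidableEq V] (k t : ℕ) (G : SimpleGraph V)
    [DecidableRel G.Adj] : DecidableRel (GP k t G).Adj :=
  fun _ _ => inferInstanceAs (Decidable (_ ∧ _))

/-- Entry of the matrix `M_b`: `A` if `b = 1`, `I` if `b = 0`, `J - I - A` otherwise. -/
def ent {V : Type*} [DecidableEq V] (G : SimpleGraph V) [DecidableRel G.Adj]
    (b : ℤ) (v w : V) : ℝ :=
  if b = 1 then (if G.Adj v w then 1 else 0)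
  else if b = 0 then (if v = w then 1 else 0)
  else if v ≠ w ∧ ¬ G.Adj v w then 1 else 0

theorem GP_spectrum {V : Type*} [Fintype V] [DecidableEq V]
    (G : SimpleGraph V) [DecidableRel G.Adj] (hconn : G.Connected)
    (n d k t : ℕ) (hn : Fintype.card V = n) (hn0 : 0 < n)
    (hreg : G.IsRegularOfDegree d) (ht : 1 ≤ t) (htk : t ≤ k)
    (lam : Fin n → ℝ) (u : Fin n → V → ℝ) (lamStar : Fin n → ℝ)
    (hlam_first : lam ⟨0, hn0⟩ = d)
    (hsorted : ∀ i j : Fin n, i ≤ j → lam j ≤ lam i)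
    (heig : ∀ i, (G.adjMatrix ℝ).mulVec (u i) = lam i • u i)
    (horth : ∀ i j, u i ⬝ᵥ u j = if i = j then 1 else 0)
    (hstar_first : lamStar ⟨0, hn0⟩ = (n : ℝ) - 1 - d)
    (hstar : ∀ i, i ≠ ⟨0, hn0⟩ → lamStar i = -1 - lam i) :
    ∀ idx : Fin k → Fin n,
      ((GP k t G).adjMatrix ℝ).mulVec (fun x => ∏ j, u (idx j) (x j)) =
        (∑ b ∈ (Fintype.piFinset fun _ : Fin k => ({-1, 0, 1} : Finset ℤ)).filter
            (fun b => t ≤ (Finset.univ.filter fun j => b j = 1).card),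
          ∏ j, (((1 + (b j : ℝ)) / 2) * lam (idx j) ^ (b j).natAbs
            + ((1 - (b j : ℝ)) / 2) * lamStar (idx j) ^ (b j).natAbs))
        • (fun x => ∏ j, u (idx j) (x j)) := by
  intro idx
  set z : Fin n := ⟨0, hn0⟩ with hz
  have hVne : Nonempty V := Fintype.card_pos_iff.mp (by omega)
  -- eigen equation pointwise
  have heig' : ∀ i v, ∑ w ∈ G.neighborFinset v, u i w = lam i * u i v := by
    intro i v
    have := congrFun (heig i) v
    rw [SimpleGraph.adjMatrix_mulVec_apply] at this
    simpa using this
  -- Step A: u z is constant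
  obtain ⟨v0, -, hv0⟩ := Finset.exists_max_image Finset.univ (u z)
    ⟨Classical.arbitrary V, Finset.mem_univ _⟩
  have hmax_adj : ∀ v w, u z v = u z v0 → G.Adj v w → u z w = u z v0 := by
    intro v w hv hadj
    have hsum : ∑ x ∈ G.neighborFinset v, u z x
        = ∑ _x ∈ G.neighborFinset v, u z v0 := by
      rw [heig' z v, Finset.sum_const, G.neighborFinset_eq_filter]
      rw [hv]
      have hcard : (Finset.univ.filter (G.Adj v)).card = d := by
        have := hreg v
        rwa [SimpleGraph.degree, SimpleGraph.neighborFinset_eq_filter] at this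
      rw [hcard, hlam_first]
      ring
    have hle : ∀ x ∈ G.neighborFinset v, u z x ≤ u z v0 :=
      fun x _ => hv0 x (Finset.mem_univ x)
    have := (Finset.sum_eq_sum_iff_of_le hle).mp hsum
    exact this w (by rwa [SimpleGraph.mem_neighborFinset])
  have hwalk : ∀ a b : V, G.Walk a b → u z a = u z v0 → u z b = u z v0 := by
    intro a b p
    induction p with
    | nil => exact id
    | cons h _ ih => intro ha; exact ih (hmax_adj _ _ ha h)
  have hconst : ∀ v, u z v = u z v0 := fun v =>
    ((hconn.preconnected v0 v)).elim (fun p => hwalk _ _ p rfl)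
  set c : ℝ := u z v0 with hcdef
  have hc2 : (n : ℝ) * (c * c) = 1 := by
    have := horth z z
    simp only [dotProduct, if_pos rfl] at this
    calc (n : ℝ) * (c * c) = ∑ _x : V, c * c := by
          rw [Finset.sum_const, Finset.card_univ, hn]; ring
      _ = ∑ x : V, u z x * u z x := by
          apply Finset.sum_congr rfl; intro x _; rw [hconst x]
      _ = 1 := this
  have hc0 : c ≠ 0 := by
    intro h
    rw [h] at hc2; simp at hc2
  have hsumz : ∑ w, u z w = (n : ℝ) * c := by
    calc ∑ w, u z w = ∑ _w : V, c := Finset.sum_congr rfl fun w _ => hconst w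
      _ = (n : ℝ) * c := by rw [Finset.sum_const, Finset.card_univ, hn]; ring
  have hsum_i : ∀ i, i ≠ z → ∑ w, u i w = 0 := by
    intro i hi
    have h0 := horth i z
    rw [if_neg hi] at h0
    have : (∑ w, u i w) * c = 0 := by
      rw [Finset.sum_mul]
      rw [dotProduct] at h0
      calc ∑ w, u i w * c = ∑ w, u i w * u z w := by
            apply Finset.sum_congr rfl; intro w _; rw [hconst w]
        _ = 0 := h0
    exact (mul_eq_zero.mp this).resolve_right hc0
  have Jlem : ∀ i (v : V), ∑ w, u i w = (lamStar i + 1 + lam i) * u i v := by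
    intro i v
    by_cases hi : i = z
    · subst hi
      rw [hsumz, hconst v, hstar_first, hlam_first]; push_cast; ring
    · rw [hsum_i i hi, hstar i hi]; ring
  -- eigen relations for ent
  have feig : ∀ (b : ℤ), b ∈ ({-1, 0, 1} : Finset ℤ) → ∀ i (v : V),
      ∑ w, ent G b v w * u i w
        = (((1 + (b : ℝ)) / 2) * lam i ^ b.natAbs
            + ((1 - (b : ℝ)) / 2) * lamStar i ^ b.natAbs) * u i v := by
    intro b hb i v
    simp only [Finset.mem_insert, Finset.mem_singleton] at hb
    rcases hb with rfl | rfl | rfl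
    · -- b = -1
      have hent : ∀ w, ent G (-1) v w
          = 1 - (if v = w then 1 else 0) - (if G.Adj v w then 1 else 0) := by
        intro w
        simp only [ent, if_neg (by norm_num : (-1 : ℤ) ≠ 1),
          if_neg (by norm_num : (-1 : ℤ) ≠ 0)]
        by_cases h1 : v = w
        · subst h1; simp [G.loopless.irrefl v]
        · by_cases h2 : G.Adj v w <;> simp [h1, h2]
      have hA : ∑ w, (if G.Adj v w then 1 else 0 : ℝ) * u i w = lam i * u i v := by
        rw [← heig' i v, SimpleGraph.neighborFinset_eq_filter, Finset.sum_filter]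
        apply Finset.sum_congr rfl
        intro w _
        by_cases h : G.Adj v w <;> simp [h]
      have hI : ∑ w, (if v = w then 1 else 0 : ℝ) * u i w = u i v := by
        simp [ite_mul]
      have : ∑ w, ent G (-1) v w * u i w
          = (∑ w, u i w) - u i v - lam i * u i v := by
        simp only [hent, sub_mul, one_mul]
        rw [Finset.sum_sub_distrib, Finset.sum_sub_distrib, hA, hI]
      rw [this, Jlem i v]
      simp only [Int.natAbs_neg, Int.natAbs_one, pow_one]
      push_cast
      ring
    · -- b = 0
      have hI : ∑ w, ent G 0 v w * u i w = u i v := by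
        simp only [ent, if_neg (by norm_num : (0 : ℤ) ≠ 1), if_pos rfl]
        simp [ite_mul]
      rw [hI]
      simp only [Int.natAbs_zero, pow_zero]
      push_cast
      ring
    · -- b = 1
      have hA : ∑ w, ent G 1 v w * u i w = lam i * u i v := by
        simp only [ent, if_pos rfl]
        rw [← heig' i v, SimpleGraph.neighborFinset_eq_filter, Finset.sum_filter]
        apply Finset.sum_congr rfl
        intro w _
        by_cases h : G.Adj v w <;> simp [h]
      rw [hA]
      simp only [Int.natAbs_one, pow_one]
      push_cast
      ring
  -- adjacency expansion
  have hadjexp : ∀ x y : Fin k → V,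
      ((GP k t G).adjMatrix ℝ) x y
        = ∑ b ∈ (Fintype.piFinset fun _ : Fin k => ({-1, 0, 1} : Finset ℤ)).filter
            (fun b => t ≤ (Finset.univ.filter fun j => b j = 1).card),
          ∏ j, ent G (b j) (x j) (y j) := by
    intro x y
    set prof : Fin k → ℤ := fun j =>
      if G.Adj (x j) (y j) then 1 else if x j = y j then 0 else -1 with hprof
    have hprofmem : prof ∈ Fintype.piFinset fun _ : Fin k => ({-1, 0, 1} : Finset ℤ) := by
      rw [Fintype.mem_piFinset]
      intro j
      simp only [hprof]
      by_cases h1 : G.Adj (x j) (y j)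
      · simp [h1]
      · by_cases h2 : x j = y j <;> simp [h1, h2]
    have hterm : ∀ b ∈ (Fintype.piFinset fun _ : Fin k => ({-1, 0, 1} : Finset ℤ)),
        (∏ j, ent G (b j) (x j) (y j)) = if b = prof then 1 else 0 := by
      intro b hb
      by_cases hbp : b = prof
      · subst hbp
        rw [if_pos rfl]
        apply Finset.prod_eq_one
        intro j _
        simp only [hprof, ent]
        by_cases h1 : G.Adj (x j) (y j)
        · simp [h1]
        · by_cases h2 : x j = y j
          · simp [h1, h2]
          · simp [h1, h2]
      · rw [if_neg hbp]
        have : ∃ j, b j ≠ prof j := by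
          by_contra hc
          push_neg at hc
          exact hbp (funext hc)
        obtain ⟨j, hj⟩ := this
        apply Finset.prod_eq_zero (Finset.mem_univ j)
        have hbj : b j ∈ ({-1, 0, 1} : Finset ℤ) := Fintype.mem_piFinset.mp hb j
        simp only [Finset.mem_insert, Finset.mem_singleton] at hbj
        simp only [hprof] at hj
        rcases hbj with h | h | h <;> rw [h] <;> rw [h] at hj
        · -- b j = -1, so prof j ≠ -1 : Adj or eq
          have hcond : ¬ (x j ≠ y j ∧ ¬ G.Adj (x j) (y j)) := by
            rintro ⟨hne, hnadj⟩
            rw [if_neg hnadj, if_neg hne] at hj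
            exact hj rfl
          have hval : ent G (-1) (x j) (y j)
              = if x j ≠ y j ∧ ¬ G.Adj (x j) (y j) then 1 else 0 := by
            norm_num [ent]
          rw [hval, if_neg hcond]
        · -- b j = 0, so prof j ≠ 0 : x j ≠ y j
          have hne : ¬ x j = y j := by
            intro he
            have hnadj : ¬ G.Adj (x j) (y j) := by rw [he]; exact G.loopless.irrefl (y j)
            rw [if_neg hnadj, if_pos he] at hj
            exact hj rfl
          have hval : ent G 0 (x j) (y j) = if x j = y j then 1 else 0 := by
            norm_num [ent]
          rw [hval, if_neg hne]
        · -- b j = 1, so prof j ≠ 1 : ¬ Adj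
          have hnadj : ¬ G.Adj (x j) (y j) := by
            intro hadj
            rw [if_pos hadj] at hj
            exact hj rfl
          have hval : ent G 1 (x j) (y j) = if G.Adj (x j) (y j) then 1 else 0 := by
            norm_num [ent]
          rw [hval, if_neg hnadj]
    rw [Finset.sum_congr rfl (fun b hb => hterm b (Finset.mem_filter.mp hb).1)]
    rw [Finset.sum_ite_eq' _ prof (fun _ => (1 : ℝ))]
    have hfilt : (Finset.univ.filter fun j => prof j = 1)
        = Finset.univ.filter fun j => G.Adj (x j) (y j) := by
      apply Finset.filter_congr
      intro j _
      simp only [hprof]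
      by_cases h1 : G.Adj (x j) (y j)
      · simp [h1]
      · by_cases h2 : x j = y j <;> simp [h1, h2]
    have hadj_iff : (GP k t G).Adj x y
        ↔ t ≤ (Finset.univ.filter fun j => G.Adj (x j) (y j)).card := by
      constructor
      · exact fun h => h.2
      · intro h
        refine ⟨?_, h⟩
        have hcard : 0 < (Finset.univ.filter fun j => G.Adj (x j) (y j)).card := by
          omega
        obtain ⟨j, hj⟩ := Finset.card_pos.mp hcard
        have hadj := (Finset.mem_filter.mp hj).2
        intro he
        exact G.loopless.irrefl (y j) (by rw [← he] at hadj ⊢; exact he ▸ hadj)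
    rw [SimpleGraph.adjMatrix_apply]
    by_cases hA : (GP k t G).Adj x y
    · rw [if_pos hA, if_pos]
      rw [Finset.mem_filter]
      exact ⟨hprofmem, by rw [hfilt]; exact hA.2⟩
    · rw [if_neg hA, if_neg]
      rw [Finset.mem_filter]
      rintro ⟨-, hcard⟩
      rw [hfilt] at hcard
      exact hA (hadj_iff.mpr hcard)
  -- final assembly
  funext x
  show ∑ y, ((GP k t G).adjMatrix ℝ) x y * ∏ j, u (idx j) (y j) = _
  calc ∑ y, ((GP k t G).adjMatrix ℝ) x y * ∏ j, u (idx j) (y j)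
      = ∑ y : Fin k → V,
          ∑ b ∈ (Fintype.piFinset fun _ : Fin k => ({-1, 0, 1} : Finset ℤ)).filter
            (fun b => t ≤ (Finset.univ.filter fun j => b j = 1).card),
          ∏ j, ent G (b j) (x j) (y j) * u (idx j) (y j) := by
        apply Finset.sum_congr rfl
        intro y _
        rw [hadjexp x y, Finset.sum_mul]
        apply Finset.sum_congr rfl
        intro b _
        rw [← Finset.prod_mul_distrib]
    _ = ∑ b ∈ (Fintype.piFinset fun _ : Fin k => ({-1, 0, 1} : Finset ℤ)).filter
            (fun b => t ≤ (Finset.univ.filter fun j => b j = 1).card),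
          ∑ y : Fin k → V, ∏ j, ent G (b j) (x j) (y j) * u (idx j) (y j) :=
        Finset.sum_comm
    _ = ∑ b ∈ (Fintype.piFinset fun _ : Fin k => ({-1, 0, 1} : Finset ℤ)).filter
            (fun b => t ≤ (Finset.univ.filter fun j => b j = 1).card),
          ∏ j, ∑ w, ent G (b j) (x j) w * u (idx j) w := by
        apply Finset.sum_congr rfl
        intro b _
        rw [Finset.prod_univ_sum (fun _ => Finset.univ)
          (fun j w => ent G (b j) (x j) w * u (idx j) w), Fintype.piFinset_univ]
    _ = ∑ b ∈ (Fintype.piFinset fun _ : Fin k => ({-1, 0, 1} : Finset ℤ)).filter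
            (fun b => t ≤ (Finset.univ.filter fun j => b j = 1).card),
          (∏ j, (((1 + (b j : ℝ)) / 2) * lam (idx j) ^ (b j).natAbs
            + ((1 - (b j : ℝ)) / 2) * lamStar (idx j) ^ (b j).natAbs))
            * ∏ j, u (idx j) (x j) := by
        apply Finset.sum_congr rfl
        intro b hb
        have hbmem := (Finset.mem_filter.mp hb).1
        rw [← Finset.prod_mul_distrib]
        apply Finset.prod_congr rfl
        intro j _
        exact feig (b j) (Fintype.mem_piFinset.mp hbmem j) (idx j) (x j)
    _ = _ := by
        rw [← Finset.sum_mul]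
        simp [Pi.smul_apply, smul_eq_mul]
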